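/- arXiv:2111.14020 — 5 statements merged into one kernel-verified Lean document; each statement's English description precedes it below -/
import Mathlib

section
/- Let L = L_D + L_F where L_D and L_F are symmetric positive semidefinite matrices. Then for any s ∈ ℝ^n, sᵀ(I+L)⁻²s ≤ sᵀ(I+L_F)⁻¹s. That is, the polarization of the full graph is at most the polarization-plus-disagreement of the fixed subgraph. -/
open Matrix

theorem polarization_le_fixed_pd {n : ℕ}
    (L LD LF : Matrix (Fin n) (Fin n) ℝ)
    (hD : LD.PosSemidef) (hF : LF.PosSemidef) (hL : L = LD + LF)
    (s : Fin n → ℝ) :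
    s ⬝ᵥ (((1 + L)⁻¹ * (1 + L)⁻¹) *ᵥ s) ≤ s ⬝ᵥ ((1 + LF)⁻¹ *ᵥ s) := by
  set A : Matrix (Fin n) (Fin n) ℝ := 1 + L with hAdef
  set B : Matrix (Fin n) (Fin n) ℝ := 1 + LF with hBdef
  have hA : A.PosDef := Matrix.PosDef.add_posSemidef Matrix.PosDef.one (hL ▸ hD.add hF)
  have hB : B.PosDef := Matrix.PosDef.add_posSemidef Matrix.PosDef.one hF
  have hAu := hA.isUnit
  have hBu := hB.isUnit
  have hAdet : IsUnit A.det := (Matrix.isUnit_iff_isUnit_det A).1 hAu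
  have hBdet : IsUnit B.det := (Matrix.isUnit_iff_isUnit_det B).1 hBu
  -- symmetry facts (over ℝ, conjTranspose = transpose)
  have hAsym : Aᵀ = A := hA.isHermitian
  have hAinvsym : (A⁻¹)ᵀ = A⁻¹ := hA.inv.isHermitian
  set x : Fin n → ℝ := A⁻¹ *ᵥ s with hx
  have hsx : A *ᵥ x = s := by
    rw [hx, Matrix.mulVec_mulVec, Matrix.mul_nonsing_inv A hAdet, Matrix.one_mulVec]
  -- key algebraic identity
  have hAB : A = B + LD := by rw [hAdef, hBdef, hL]; abel
  have expand : A * B⁻¹ * A = B + LD + LD + LD * B⁻¹ * LD := by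
    rw [hAB, Matrix.add_mul, Matrix.mul_nonsing_inv B hBdet, Matrix.add_mul,
      Matrix.one_mul, Matrix.mul_add (LD * B⁻¹) B LD,
      Matrix.mul_assoc LD B⁻¹ B, Matrix.nonsing_inv_mul B hBdet, Matrix.mul_one]
    abel
  have key : A * B⁻¹ * A = 1 + (LF + LD + LD + LD * B⁻¹ * LD) := by
    rw [expand, hBdef]; abel
  -- the correction matrix is PSD
  have hM : (LF + LD + LD + LD * B⁻¹ * LD).PosSemidef := by
    have h1 : (LD * B⁻¹ * LDᴴ).PosSemidef :=
      hB.inv.posSemidef.mul_mul_conjTranspose_same LD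
    rw [hD.isHermitian.eq] at h1
    exact ((hF.add hD).add hD).add h1
  have hnonneg : 0 ≤ x ⬝ᵥ ((LF + LD + LD + LD * B⁻¹ * LD) *ᵥ x) := by
    simpa using hM.dotProduct_mulVec_nonneg x
  -- rewrite LHS: s ⬝ᵥ (A⁻¹ * A⁻¹) *ᵥ s = x ⬝ᵥ x
  have hLHS : s ⬝ᵥ ((A⁻¹ * A⁻¹) *ᵥ s) = x ⬝ᵥ x := by
    rw [← Matrix.mulVec_mulVec, ← hx, Matrix.dotProduct_mulVec,
      ← Matrix.mulVec_transpose, hAinvsym, ← hx]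
  -- rewrite RHS: s ⬝ᵥ B⁻¹ *ᵥ s = x ⬝ᵥ (A * B⁻¹ * A) *ᵥ x
  have hRHS : x ⬝ᵥ ((A * B⁻¹ * A) *ᵥ x) = s ⬝ᵥ (B⁻¹ *ᵥ s) := by
    rw [← Matrix.mulVec_mulVec, ← Matrix.mulVec_mulVec, Matrix.dotProduct_mulVec,
      ← Matrix.mulVec_transpose, hAsym, hsx]
  have hsplit : x ⬝ᵥ ((A * B⁻¹ * A) *ᵥ x)
      = x ⬝ᵥ x + x ⬝ᵥ ((LF + LD + LD + LD * B⁻¹ * LD) *ᵥ x) := by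
    rw [key, Matrix.add_mulVec, dotProduct_add, Matrix.one_mulVec]
  rw [hLHS, ← hRHS, hsplit]
  linarith
end

section
/- Let L be a graph Laplacian, s ∈ ℝ^n, z = (I+L)⁻¹s, and E the edge Laplacian of edge (u,v) with δ = z(u)−z(v). Then sᵀ(I+L)⁻¹s − δ² ≤ sᵀ(I+L+E)⁻¹s ≤ sᵀ(I+L)⁻¹s − δ²/3. -/
open Matrix

lemma aux_mul_vecMulVec {n : ℕ} (A : Matrix (Fin n) (Fin n) ℝ) (x y : Fin n → ℝ) :
    A * vecMulVec x y = vecMulVec (A *ᵥ x) y := by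
  ext i j
  simp [mul_apply, vecMulVec_apply, mulVec, dotProduct, Finset.sum_mul, mul_assoc]

lemma aux_vecMul_vecMulVec {n : ℕ} (x a b : Fin n → ℝ) :
    x ᵥ* vecMulVec a b = (x ⬝ᵥ a) • b := by
  ext j
  simp [vecMul, vecMulVec_apply, dotProduct, Finset.sum_mul, mul_assoc]

lemma aux_vecMulVec_mulVec {n : ℕ} (x y s : Fin n → ℝ) :
    vecMulVec x y *ᵥ s = (y ⬝ᵥ s) • x := by
  ext i
  simp [mulVec, vecMulVec_apply, dotProduct, Finset.mul_sum, mul_assoc, mul_comm, mul_left_comm]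

lemma aux_vecMulVec_smul {n : ℕ} (x y : Fin n → ℝ) (c : ℝ) :
    vecMulVec x (c • y) = c • vecMulVec x y := by
  ext i j
  simp [vecMulVec_apply, mul_comm, mul_left_comm]

lemma aux_dot_two {n : ℕ} (χ : Fin n → ℝ) (f : Fin n → ℝ) (u v : Fin n) (huv : u ≠ v)
    (hχu : χ u = 1) (hχv : χ v = -1) (hχ : ∀ w, w ≠ u → w ≠ v → χ w = 0) :
    χ ⬝ᵥ f = f u - f v := by
  have h : (Finset.univ : Finset (Fin n)) = insert u (insert v (Finset.univ \ {u, v})) := by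
    ext w
    by_cases h1 : w = u <;> by_cases h2 : w = v <;> simp [h1, h2]
  rw [dotProduct, h]
  rw [Finset.sum_insert (by simp [huv]), Finset.sum_insert (by simp)]
  rw [Finset.sum_eq_zero (fun w hw => by
    simp only [Finset.mem_sdiff, Finset.mem_insert, Finset.mem_singleton] at hw
    push_neg at hw
    rw [hχ w hw.2.1 hw.2.2, zero_mul])]
  rw [hχu, hχv]; ring

theorem pd_edge_addition_bounds {n : ℕ}
    (L : Matrix (Fin n) (Fin n) ℝ) (hL : L.PosSemidef)
    (s z χ : Fin n → ℝ) (u v : Fin n) (huv : u ≠ v)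
    (hχu : χ u = 1) (hχv : χ v = -1)
    (hχ : ∀ w, w ≠ u → w ≠ v → χ w = 0)
    (E : Matrix (Fin n) (Fin n) ℝ) (hE : E = vecMulVec χ χ)
    (hz : z = (1 + L)⁻¹ *ᵥ s)
    (δ : ℝ) (hδ : δ = z u - z v) :
    s ⬝ᵥ ((1 + L)⁻¹ *ᵥ s) - δ ^ 2 ≤ s ⬝ᵥ ((1 + L + E)⁻¹ *ᵥ s) ∧
    s ⬝ᵥ ((1 + L + E)⁻¹ *ᵥ s) ≤ s ⬝ᵥ ((1 + L)⁻¹ *ᵥ s) - δ ^ 2 / 3 := by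
  set A : Matrix (Fin n) (Fin n) ℝ := 1 + L with hAdef
  have hA : A.PosDef := Matrix.PosDef.add_posSemidef Matrix.PosDef.one hL
  have hdet : IsUnit A.det := isUnit_iff_ne_zero.mpr (ne_of_gt hA.det_pos)
  have hAAinv : A * A⁻¹ = 1 := mul_nonsing_inv A hdet
  have hAinvA : A⁻¹ * A = 1 := nonsing_inv_mul A hdet
  -- symmetry of A and A⁻¹
  have hAsymm : Aᵀ = A := by
    have := hA.isHermitian
    rwa [Matrix.IsHermitian, conjTranspose_eq_transpose_of_trivial] at this
  have hAinvsymm : A⁻¹ᵀ = A⁻¹ := by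
    rw [transpose_nonsing_inv, hAsymm]
  set w : Fin n → ℝ := A⁻¹ *ᵥ χ with hw
  have hAw : A *ᵥ w = χ := by
    rw [hw, mulVec_mulVec, hAAinv, one_mulVec]
  set r : ℝ := χ ⬝ᵥ w with hrdef
  -- r ≥ 0
  have hr0 : 0 ≤ r := by
    have h := (hA.inv).posSemidef.dotProduct_mulVec_nonneg χ
    simpa [star_trivial] using h
  -- r ≤ 2
  have hχχ : χ ⬝ᵥ χ = 2 := by
    rw [aux_dot_two χ χ u v huv hχu hχv hχ, hχu, hχv]; norm_num
  have hr2 : r ≤ 2 := by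
    have hdecomp : χ = w + L *ᵥ w := by
      rw [← hAw, hAdef, add_mulVec, one_mulVec]
    have hsub : χ - w = L *ᵥ w := by rw [hdecomp]; abel
    have key : χ ⬝ᵥ χ - r = χ ⬝ᵥ (L *ᵥ w) := by
      rw [hrdef, ← dotProduct_sub, hsub]
    have h1 : 0 ≤ w ⬝ᵥ (L *ᵥ w) := by
      have := hL.dotProduct_mulVec_nonneg w; simpa [star_trivial] using this
    have h2 : 0 ≤ (L *ᵥ w) ⬝ᵥ (L *ᵥ w) := by
      rw [dotProduct]
      exact Finset.sum_nonneg fun i _ => mul_self_nonneg _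
    have h3 : χ ⬝ᵥ (L *ᵥ w) = w ⬝ᵥ (L *ᵥ w) + (L *ᵥ w) ⬝ᵥ (L *ᵥ w) := by
      nth_rewrite 1 [hdecomp]
      rw [add_dotProduct]
    have : 0 ≤ χ ⬝ᵥ χ - r := by rw [key, h3]; linarith
    rw [hχχ] at this; linarith
  have h1r : (0:ℝ) < 1 + r := by linarith
  set c : ℝ := (1 + r)⁻¹ with hcdef
  have hc1 : c ≤ 1 := by
    rw [hcdef]
    rw [inv_le_one_iff₀]; right; linarith
  have hc3 : 1/3 ≤ c := by
    rw [hcdef]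
    rw [le_inv_comm₀ (by norm_num) h1r]
    · linarith
  -- δ = s ⬝ᵥ w
  have hsw : s ⬝ᵥ w = δ := by
    rw [hδ, hz, hw, dotProduct_mulVec, ← mulVec_transpose, hAinvsymm, dotProduct_comm]
    exact aux_dot_two χ (A⁻¹ *ᵥ s) u v huv hχu hχv hχ
  -- Sherman-Morrison
  set M : Matrix (Fin n) (Fin n) ℝ := A⁻¹ - c • vecMulVec w w with hM
  have hinv : (A + E)⁻¹ = M := by
    apply inv_eq_right_inv
    have e1 : A * vecMulVec w w = vecMulVec χ w := by
      rw [aux_mul_vecMulVec, hAw]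
    have e2 : vecMulVec χ χ * A⁻¹ = vecMulVec χ w := by
      ext i j
      simp only [mul_apply, vecMulVec_apply]
      have : w j = ∑ k, χ k * A⁻¹ k j := by
        rw [hw]
        conv_lhs => rw [← hAinvsymm]
        simp [mulVec, dotProduct, transpose_apply, mul_comm]
      rw [this, Finset.mul_sum]
      exact Finset.sum_congr rfl fun k _ => by ring
    have e3 : vecMulVec χ χ * vecMulVec w w = r • vecMulVec χ w := by
      rw [show vecMulVec χ χ * vecMulVec w w = vecMulVec χ (χ ᵥ* vecMulVec w w) by
        ext i j; simp [mul_apply, vecMulVec_apply, vecMul, dotProduct, Finset.mul_sum, mul_assoc]]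
      rw [aux_vecMul_vecMulVec, ← hrdef, aux_vecMulVec_smul]
    rw [hE, hM, add_mul, mul_sub, mul_sub, hAAinv, mul_smul_comm, mul_smul_comm, e1, e2, e3,
      smul_smul]
    have hc : c * (1 + r) = 1 := inv_mul_cancel₀ (ne_of_gt h1r)
    have : (1 : Matrix (Fin n) (Fin n) ℝ) - c • vecMulVec χ w +
        (vecMulVec χ w - (c * r) • vecMulVec χ w) =
        1 + ((1 : ℝ) - c - c * r) • vecMulVec χ w := by
      rw [sub_smul, sub_smul, one_smul]
      abel
    rw [this, show (1 : ℝ) - c - c * r = 0 by nlinarith, zero_smul, add_zero]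
  -- final computation
  have hmain : s ⬝ᵥ ((A + E)⁻¹ *ᵥ s) = s ⬝ᵥ (A⁻¹ *ᵥ s) - c * δ ^ 2 := by
    rw [hinv, hM, sub_mulVec, dotProduct_sub, smul_mulVec, aux_vecMulVec_mulVec,
      dotProduct_smul, smul_eq_mul, dotProduct_smul, smul_eq_mul, dotProduct_comm w s, hsw]
    ring
  rw [hmain]
  constructor <;> nlinarith [sq_nonneg δ]
end

section
/- Let L be a graph Laplacian containing edge (u,v) (so L − E is PSD, where E is the edge Laplacian of (u,v)), s ∈ ℝ^n, z = (I+L)⁻¹s, δ = z(u)−z(v), and suppose r = χᵀ(I+L)⁻¹χ ∈ (0,1]. If r < 1, then sᵀ(I+L−E)⁻¹s ≥ sᵀ(I+L)⁻¹s + δ². -/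
open Matrix

private lemma mul_vecMulVec' {n : ℕ} (M : Matrix (Fin n) (Fin n) ℝ) (a b : Fin n → ℝ) :
    M * vecMulVec a b = vecMulVec (M *ᵥ a) b := by
  ext i j
  simp only [Matrix.mul_apply, Matrix.vecMulVec_apply, Matrix.mulVec, dotProduct,
    Finset.sum_mul]
  exact Finset.sum_congr rfl fun k _ => by ring

private lemma vecMulVec_mul' {n : ℕ} (M : Matrix (Fin n) (Fin n) ℝ) (a b : Fin n → ℝ) :
    vecMulVec a b * M = vecMulVec a (b ᵥ* M) := by
  ext i j
  simp only [Matrix.mul_apply, Matrix.vecMulVec_apply, Matrix.vecMul, dotProduct,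
    Finset.mul_sum]
  exact Finset.sum_congr rfl fun k _ => by ring

private lemma vecMulVec_mul_vecMulVec' {n : ℕ} (a b c d : Fin n → ℝ) :
    vecMulVec a b * vecMulVec c d = (b ⬝ᵥ c) • vecMulVec a d := by
  ext i j
  simp only [Matrix.mul_apply, Matrix.vecMulVec_apply, Matrix.smul_apply, dotProduct,
    smul_eq_mul, Finset.sum_mul]
  exact Finset.sum_congr rfl fun k _ => by ring

private lemma vecMulVec_mulVec' {n : ℕ} (a b x : Fin n → ℝ) :
    vecMulVec a b *ᵥ x = (b ⬝ᵥ x) • a := by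
  ext i
  simp only [Matrix.mulVec, Matrix.vecMulVec_apply, dotProduct, Pi.smul_apply,
    smul_eq_mul, Finset.sum_mul]
  exact Finset.sum_congr rfl fun k _ => by ring

theorem pd_edge_deletion_bound {n : ℕ}
    (L : Matrix (Fin n) (Fin n) ℝ) (hL : L.PosSemidef)
    (s z χ : Fin n → ℝ) (u v : Fin n) (huv : u ≠ v)
    (hχu : χ u = 1) (hχv : χ v = -1)
    (hχ : ∀ w, w ≠ u → w ≠ v → χ w = 0)
    (E : Matrix (Fin n) (Fin n) ℝ) (hE : E = vecMulVec χ χ)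
    (hLE : (L - E).PosSemidef)
    (hz : z = (1 + L)⁻¹ *ᵥ s)
    (δ r : ℝ) (hδ : δ = z u - z v) (hr : r = χ ⬝ᵥ ((1 + L)⁻¹ *ᵥ χ))
    (hr0 : 0 < r) (hr1 : r < 1) :
    s ⬝ᵥ ((1 + L - E)⁻¹ *ᵥ s) ≥ s ⬝ᵥ ((1 + L)⁻¹ *ᵥ s) + δ ^ 2 := by
  set M : Matrix (Fin n) (Fin n) ℝ := 1 + L with hMdef
  have hM : M.PosDef := Matrix.PosDef.one.add_posSemidef hL
  have hMunit : IsUnit M.det := hM.isUnit.map (Matrix.detMonoidHom)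
  have hinvM : M * M⁻¹ = 1 := Matrix.mul_nonsing_inv M hMunit
  have hMinv : M⁻¹ * M = 1 := Matrix.nonsing_inv_mul M hMunit
  have hMT : Mᵀ = M := hM.isHermitian
  have hsymm : M⁻¹ᵀ = M⁻¹ := by rw [Matrix.transpose_nonsing_inv, hMT]
  set a : Fin n → ℝ := M⁻¹ *ᵥ χ with ha
  have hMa : M *ᵥ a = χ := by
    rw [ha, Matrix.mulVec_mulVec, hinvM, Matrix.one_mulVec]
  have hχa : χ ᵥ* M⁻¹ = a := by rw [← hsymm, Matrix.vecMul_transpose]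
  have h1r : (0:ℝ) < 1 - r := by linarith
  set N : Matrix (Fin n) (Fin n) ℝ := M⁻¹ + (1 - r)⁻¹ • vecMulVec a a with hN
  have key : (M - E) * N = 1 := by
    have hEMinv : E * M⁻¹ = vecMulVec χ a := by rw [hE, vecMulVec_mul', hχa]
    have hMvv : M * vecMulVec a a = vecMulVec χ a := by rw [mul_vecMulVec', hMa]
    have hEvv : E * vecMulVec a a = r • vecMulVec χ a := by
      rw [hE, vecMulVec_mul_vecMulVec', hr]
    rw [hN, sub_mul, mul_add, mul_add, hinvM, Matrix.mul_smul, Matrix.mul_smul,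
      hMvv, hEMinv, hEvv]
    have hcoef : (1 - r)⁻¹ • vecMulVec χ a - (vecMulVec χ a + (1 - r)⁻¹ • r • vecMulVec χ a)
        = 0 := by
      rw [smul_smul, ← sub_sub]
      rw [show (1 - r)⁻¹ • vecMulVec χ a - vecMulVec χ a - ((1 - r)⁻¹ * r) • vecMulVec χ a
          = ((1 - r)⁻¹ - 1 - (1 - r)⁻¹ * r) • vecMulVec χ a by
        rw [sub_smul, sub_smul, one_smul]]
      rw [show (1 - r)⁻¹ - 1 - (1 - r)⁻¹ * r = 0 by field_simp; ring, zero_smul]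
    rw [add_sub_assoc, hcoef, add_zero]
  have hinv : (M - E)⁻¹ = N := Matrix.inv_eq_right_inv key
  have hχz : χ ⬝ᵥ z = δ := by
    rw [hδ, dotProduct]
    rw [Fintype.sum_eq_add u v huv (fun x hx => by
      rw [hχ x hx.1 hx.2, zero_mul])]
    rw [hχu, hχv]; ring
  have haz : a ⬝ᵥ s = δ := by
    rw [← hχz, hz, Matrix.dotProduct_mulVec, hχa]
  have hgoal : s ⬝ᵥ ((M - E)⁻¹ *ᵥ s) = s ⬝ᵥ (M⁻¹ *ᵥ s) + (1 - r)⁻¹ * (δ * δ) := by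
    rw [hinv, hN, Matrix.add_mulVec, dotProduct_add, Matrix.smul_mulVec,
      vecMulVec_mulVec', haz, dotProduct_smul, dotProduct_smul,
      dotProduct_comm s a, haz]
    simp [smul_eq_mul]
  rw [hz] at hδ
  have hME : s ⬝ᵥ ((1 + L - E)⁻¹ *ᵥ s) = s ⬝ᵥ (M⁻¹ *ᵥ s) + (1 - r)⁻¹ * (δ * δ) := hgoal
  rw [hME]
  have h2 : 1 ≤ (1 - r)⁻¹ := by
    rw [le_inv_comm₀ one_pos h1r]; linarith
  nlinarith [sq_nonneg δ, h2]
end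

section
/- If an edge (u,v) belongs to a graph with Laplacian L (i.e., L − E is PSD where E = χχᵀ is the edge Laplacian of (u,v)), then the quantity r = χᵀ(I+L)⁻¹χ satisfies 0 < r ≤ 1. -/
open Matrix

theorem effective_resistance_of_edge_in_graph {n : ℕ}
    (L : Matrix (Fin n) (Fin n) ℝ) (hL : L.PosSemidef)
    (χ : Fin n → ℝ) (u v : Fin n) (huv : u ≠ v)
    (hχu : χ u = 1) (hχv : χ v = -1)
    (hχ : ∀ w, w ≠ u → w ≠ v → χ w = 0)
    (E : Matrix (Fin n) (Fin n) ℝ) (hE : E = vecMulVec χ χ)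
    (hLE : (L - E).PosSemidef) :
    0 < χ ⬝ᵥ ((1 + L)⁻¹ *ᵥ χ) ∧ χ ⬝ᵥ ((1 + L)⁻¹ *ᵥ χ) ≤ 1 := by
  have hχ0 : χ ≠ 0 := by
    intro h
    have := congrFun h u
    simp [hχu] at this
  have hM : (1 + L : Matrix (Fin n) (Fin n) ℝ).PosDef :=
    Matrix.PosDef.add_posSemidef Matrix.PosDef.one hL
  have hMinv : ((1 + L : Matrix (Fin n) (Fin n) ℝ)⁻¹).PosDef := hM.inv
  set y : Fin n → ℝ := (1 + L)⁻¹ *ᵥ χ with hy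
  have hpos : 0 < χ ⬝ᵥ y := by simpa using hMinv.dotProduct_mulVec_pos hχ0
  refine ⟨hpos, ?_⟩
  have hMy : (1 + L) *ᵥ y = χ := by
    rw [hy, Matrix.mulVec_mulVec, Matrix.mul_nonsing_inv _ (isUnit_iff_ne_zero.mpr hM.det_pos.ne'), Matrix.one_mulVec]
  have hME : ((1 + L) - E).PosSemidef := by
    have : (1 + L) - E = 1 + (L - E) := by abel
    rw [this]
    exact Matrix.PosSemidef.add (Matrix.PosDef.one).posSemidef hLE
  have h0 : 0 ≤ y ⬝ᵥ (((1 + L) - E) *ᵥ y) := by simpa using hME.dotProduct_mulVec_nonneg y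
  have hyE : y ⬝ᵥ (E *ᵥ y) = (χ ⬝ᵥ y) * (χ ⬝ᵥ y) := by
    simp only [hE, dotProduct, Matrix.mulVec, Matrix.vecMulVec_apply,
      dotProduct, Finset.mul_sum, Finset.sum_mul]
    rw [Finset.sum_comm]
    congr 1; ext j; congr 1; ext i; ring
  have hyM : y ⬝ᵥ ((1 + L) *ᵥ y) = χ ⬝ᵥ y := by
    rw [hMy, dotProduct_comm]
  rw [Matrix.sub_mulVec, dotProduct_sub, hyM, hyE] at h0
  nlinarith
end

section
/- Let L be a graph Laplacian, s ∈ ℝ^n, z = (I+L)⁻¹s. Let E₁ = χ₁χ₁ᵀ and E₂ = χ₂χ₂ᵀ be edge Laplacians with δ₁ = χ₁ᵀz, δ₂ = χ₂ᵀz, r₁ = χ₁ᵀ(I+L)⁻¹χ₁, r₂,₁ = χ₂ᵀ(I+L+E₁)⁻¹χ₂, and α = χ₁ᵀ(I+L)⁻¹χ₂/(1+r₁). Assume edge (u₂,v₂) is in the graph so that L + E₁ − E₂ is PSD and r₂,₁ < 1. Then sᵀ(I+L+E₁−E₂)⁻¹s = sᵀ(I+L)⁻¹s − δ₁²/(1+r₁)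 + (δ₂ − α·δ₁)²/(1−r₂,₁). -/
open Matrix

lemma vmv_mulVec {n : ℕ} (u v x : Fin n → ℝ) :
    vecMulVec u v *ᵥ x = (v ⬝ᵥ x) • u := by
  ext i
  simp [vecMulVec_apply, mulVec, dotProduct, Finset.mul_sum, mul_comm, mul_left_comm]

lemma vmv_psd {n : ℕ} (u : Fin n → ℝ) : (vecMulVec u u).PosSemidef := by
  rw [Matrix.posSemidef_iff_dotProduct_mulVec]
  constructor
  · ext i j; simp [vecMulVec_apply, mul_comm, conjTranspose_apply]
  · intro x
    simp only [star_trivial, vmv_mulVec, dotProduct_smul, smul_eq_mul]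
    rw [dotProduct_comm]
    exact mul_self_nonneg _

lemma sherman_morrison {n : ℕ} (M : Matrix (Fin n) (Fin n) ℝ) (hM : IsUnit M.det)
    (u v : Fin n → ℝ) (hc : 1 + v ⬝ᵥ (M⁻¹ *ᵥ u) ≠ 0) :
    (M + vecMulVec u v)⁻¹ =
      M⁻¹ - (1 + v ⬝ᵥ (M⁻¹ *ᵥ u))⁻¹ • (M⁻¹ * vecMulVec u v * M⁻¹) := by
  set c := 1 + v ⬝ᵥ (M⁻¹ *ᵥ u) with hcdef
  have hMi : M * M⁻¹ = 1 := mul_nonsing_inv _ hM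
  have hkey : vecMulVec u v * (M⁻¹ * vecMulVec u v) = (c - 1) • vecMulVec u v := by
    ext i j
    simp only [mul_apply, vecMulVec_apply, Matrix.smul_apply, smul_eq_mul, hcdef,
      add_sub_cancel_left, dotProduct, mulVec, Finset.mul_sum, Finset.sum_mul]
    apply Finset.sum_congr rfl; intro k _
    apply Finset.sum_congr rfl; intro l _
    ring
  apply inv_eq_right_inv
  have e1 : M * (c⁻¹ • (M⁻¹ * vecMulVec u v * M⁻¹)) = c⁻¹ • (vecMulVec u v * M⁻¹) := by
    rw [mul_smul_comm, ← mul_assoc, ← mul_assoc, hMi, one_mul]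
  have e2 : vecMulVec u v * (c⁻¹ • (M⁻¹ * vecMulVec u v * M⁻¹)) =
      (c⁻¹ * (c - 1)) • (vecMulVec u v * M⁻¹) := by
    rw [mul_smul_comm, ← mul_assoc, ← mul_assoc, mul_assoc (vecMulVec u v), hkey,
      smul_mul_assoc, smul_smul]
  rw [mul_sub, add_mul, add_mul, hMi, e1, e2]
  have h1 : c⁻¹ * c = 1 := inv_mul_cancel₀ hc
  match_scalars
  · ring
  · field_simp
    ring

lemma symm_swap {n : ℕ} {N : Matrix (Fin n) (Fin n) ℝ} (h : N.IsHermitian)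
    (u w : Fin n → ℝ) : u ⬝ᵥ (N *ᵥ w) = w ⬝ᵥ (N *ᵥ u) := by
  have hsy : Nᵀ = N := by
    ext i j
    have := congrFun (congrFun h.eq i) j
    simpa using this
  rw [dotProduct_mulVec, ← mulVec_transpose, hsy, dotProduct_comm]

lemma quad_eval {n : ℕ} (P : Matrix (Fin n) (Fin n) ℝ) (u v x y : Fin n → ℝ) (c : ℝ) :
    x ⬝ᵥ ((P - c • (P * vecMulVec u v * P)) *ᵥ y) =
      x ⬝ᵥ (P *ᵥ y) - c * ((v ⬝ᵥ (P *ᵥ y)) * (x ⬝ᵥ (P *ᵥ u))) := by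
  have h1 : (P * vecMulVec u v * P) *ᵥ y = (v ⬝ᵥ (P *ᵥ y)) • (P *ᵥ u) := by
    rw [← mulVec_mulVec, ← mulVec_mulVec, vmv_mulVec, mulVec_smul]
  rw [sub_mulVec, smul_mulVec, h1, dotProduct_sub, dotProduct_smul, dotProduct_smul]
  simp only [smul_eq_mul]

theorem pd_edge_swap {n : ℕ}
    (L : Matrix (Fin n) (Fin n) ℝ) (hL : L.PosSemidef)
    (s z χ₁ χ₂ : Fin n → ℝ)
    (u₁ v₁ u₂ v₂ : Fin n) (h1 : u₁ ≠ v₁) (h2 : u₂ ≠ v₂)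
    (hχ₁u : χ₁ u₁ = 1) (hχ₁v : χ₁ v₁ = -1)
    (hχ₁ : ∀ w, w ≠ u₁ → w ≠ v₁ → χ₁ w = 0)
    (hχ₂u : χ₂ u₂ = 1) (hχ₂v : χ₂ v₂ = -1)
    (hχ₂ : ∀ w, w ≠ u₂ → w ≠ v₂ → χ₂ w = 0)
    (E₁ E₂ : Matrix (Fin n) (Fin n) ℝ)
    (hE₁ : E₁ = vecMulVec χ₁ χ₁) (hE₂ : E₂ = vecMulVec χ₂ χ₂)
    (hz : z = (1 + L)⁻¹ *ᵥ s)
    (δ₁ δ₂ r₁ r₂₁ α : ℝ)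
    (hδ₁ : δ₁ = χ₁ ⬝ᵥ z) (hδ₂ : δ₂ = χ₂ ⬝ᵥ z)
    (hr₁ : r₁ = χ₁ ⬝ᵥ ((1 + L)⁻¹ *ᵥ χ₁))
    (hr₂₁ : r₂₁ = χ₂ ⬝ᵥ ((1 + L + E₁)⁻¹ *ᵥ χ₂))
    (hα : α = χ₁ ⬝ᵥ ((1 + L)⁻¹ *ᵥ χ₂) / (1 + r₁))
    (hpsd : (L + E₁ - E₂).PosSemidef) (hlt : r₂₁ < 1) :
    s ⬝ᵥ ((1 + L + E₁ - E₂)⁻¹ *ᵥ s) =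
      s ⬝ᵥ ((1 + L)⁻¹ *ᵥ s) - δ₁ ^ 2 / (1 + r₁) + (δ₂ - α * δ₁) ^ 2 / (1 - r₂₁) := by
  have hApd : (1 + L).PosDef := Matrix.PosDef.add_posSemidef Matrix.PosDef.one hL
  have hE1psd : E₁.PosSemidef := hE₁ ▸ vmv_psd χ₁
  have hBpd : (1 + L + E₁).PosDef := hApd.add_posSemidef hE1psd
  have hAdet : IsUnit (1 + L).det := isUnit_iff_ne_zero.mpr hApd.det_pos.ne'
  have hBdet : IsUnit (1 + L + E₁).det := isUnit_iff_ne_zero.mpr hBpd.det_pos.ne'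
  -- positivity facts
  have hr₁nn : 0 ≤ r₁ := by
    rw [hr₁]
    simpa using hApd.inv.posSemidef.dotProduct_mulVec_nonneg χ₁
  have hr₁pos : (0 : ℝ) < 1 + r₁ := by linarith
  have hc₁ : (1 : ℝ) + χ₁ ⬝ᵥ ((1 + L)⁻¹ *ᵥ χ₁) ≠ 0 := by rw [← hr₁]; exact hr₁pos.ne'
  have h1r₂ : (0 : ℝ) < 1 - r₂₁ := by linarith
  -- Sherman–Morrison for B = 1 + L + E₁
  have hBinv : (1 + L + E₁)⁻¹ =
      (1 + L)⁻¹ - (1 + r₁)⁻¹ • ((1 + L)⁻¹ * vecMulVec χ₁ χ₁ * (1 + L)⁻¹) := by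
    rw [hE₁, sherman_morrison (1 + L) hAdet χ₁ χ₁ hc₁, ← hr₁]
  -- symmetry helpers
  have hsA := symm_swap hApd.inv.isHermitian
  have hsB := symm_swap hBpd.inv.isHermitian
  -- key scalar identities
  have hδ₁' : χ₁ ⬝ᵥ ((1 + L)⁻¹ *ᵥ s) = δ₁ := by rw [hδ₁, hz]
  have hδ₂' : χ₂ ⬝ᵥ ((1 + L)⁻¹ *ᵥ s) = δ₂ := by rw [hδ₂, hz]
  have hsz : s ⬝ᵥ ((1 + L)⁻¹ *ᵥ χ₁) = δ₁ := by rw [hsA, hδ₁', hδ₁, hz]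
  have hsB1 : s ⬝ᵥ ((1 + L + E₁)⁻¹ *ᵥ s) = s ⬝ᵥ ((1 + L)⁻¹ *ᵥ s) - δ₁ ^ 2 / (1 + r₁) := by
    rw [hBinv, quad_eval, hδ₁', hsA s χ₁, hδ₁']
    ring
  have hχ₂B : χ₂ ⬝ᵥ ((1 + L + E₁)⁻¹ *ᵥ s) = δ₂ - α * δ₁ := by
    rw [hBinv, quad_eval, hδ₁', hδ₂', hsA χ₂ χ₁, hα]
    field_simp
  have hr₂₁' : χ₂ ⬝ᵥ ((1 + L + E₁)⁻¹ *ᵥ χ₂) = r₂₁ := hr₂₁.symm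
  -- Sherman–Morrison for C = B - E₂
  have hc₂ : (1 : ℝ) + (-χ₂) ⬝ᵥ ((1 + L + E₁)⁻¹ *ᵥ χ₂) ≠ 0 := by
    rw [neg_dotProduct, hr₂₁']
    linarith
  have hCeq : 1 + L + E₁ - E₂ = (1 + L + E₁) + vecMulVec χ₂ (-χ₂) := by
    rw [hE₂]
    ext i j
    simp [vecMulVec_apply, Matrix.sub_apply, Matrix.add_apply]
    ring
  have hCinv : (1 + L + E₁ - E₂)⁻¹ =
      (1 + L + E₁)⁻¹ -
        (1 - r₂₁)⁻¹ • ((1 + L + E₁)⁻¹ * vecMulVec χ₂ (-χ₂) * (1 + L + E₁)⁻¹) := by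
    rw [hCeq, sherman_morrison (1 + L + E₁) hBdet χ₂ (-χ₂) hc₂, neg_dotProduct, hr₂₁']
    ring_nf
  have hsB2 : s ⬝ᵥ ((1 + L + E₁)⁻¹ *ᵥ χ₂) = δ₂ - α * δ₁ := by
    rw [hsB s χ₂, hχ₂B]
  rw [hCinv, quad_eval, neg_dotProduct, hχ₂B, hsB2, hsB1]
  field_simp
  ring
end
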